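/- The frequency of the letter a in the infinite Fibonacci word exists and equals φ−1 = 1/φ, and the frequency of b equals 2−φ, where φ = (1+√5)/2. Equivalently, the number of a's among the first N letters, divided by N, tends to 1/φ as N → ∞. -/

import Mathlib

/-- The two-letter alphabet: `A` and `B`. -/
inductive Letter : Type
  | A : Letter
  | B : Letter
  deriving DecidableEq, Repr

open Letter

/-- The Fibonacci substitution θ : a → ab, b → a. -/
def theta : Letter → List Letter
  | A => [A, B]
  | B => [A]

/-- Extension of the substitution to words, by concatenation. -/
def substWord (w : List Letter) : List Letter := w.flatMap theta

/-- The n-th finite Fibonacci word F_n = θ^n(a). -/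
def FibWord (n : ℕ) : List Letter := substWord^[n] [A]

/-- The infinite Fibonacci word (each F_n is a prefix of all later ones,
and `FibWord (k+1)` has length `fib (k+3) ≥ k+1`, so index `k` is defined). -/
def FibSeq (k : ℕ) : Letter := (FibWord (k + 1)).getD k A

open Filter

noncomputable def goldenRatio' : ℝ := (1 + Real.sqrt 5) / 2

/-! ### Auxiliary lemmas -/

open Nat (fib)

lemma fib_eq (n : ℕ) : Nat.fib (n + 2) = Nat.fib (n + 1) + Nat.fib n := by
  have := Nat.fib_add_two (n := n); omega

lemma substWord_append (u v : List Letter) :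
    substWord (u ++ v) = substWord u ++ substWord v := by
  simp [substWord]

lemma FibWord_succ (n : ℕ) : FibWord (n + 1) = substWord (FibWord n) := by
  simp [FibWord, Function.iterate_succ_apply']

lemma FibWord_add_two (n : ℕ) :
    FibWord (n + 2) = FibWord (n + 1) ++ FibWord n := by
  induction n with
  | zero => decide
  | succ n ih =>
    have : FibWord (n + 3) = substWord (FibWord (n + 2)) := FibWord_succ (n + 2)
    rw [show n + 1 + 2 = n + 3 from rfl, this, ih, substWord_append,
      ← FibWord_succ, ← FibWord_succ, show n + 1 + 1 = n + 2 from rfl, ih,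
      List.append_assoc]

lemma FibWord_length (n : ℕ) : (FibWord n).length = fib (n + 2) := by
  induction n using Nat.twoStepInduction with
  | zero => decide
  | one => decide
  | more n ih1 ih2 =>
    have e : fib (n + 2 + 2) = fib (n + 1 + 2) + fib (n + 2) := fib_eq (n + 2)
    rw [FibWord_add_two, List.length_append, ih1, ih2, e]

lemma FibWord_count (n : ℕ) : (FibWord n).count A = fib (n + 1) := by
  induction n using Nat.twoStepInduction with
  | zero => decide
  | one => decide
  | more n ih1 ih2 =>
    have e : fib (n + 2 + 1) = fib (n + 1 + 1) + fib (n + 1) := fib_eq (n + 1)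
    rw [FibWord_add_two, List.count_append, ih1, ih2, e]

lemma FibWord_prefix (n : ℕ) : FibWord n <+: FibWord (n + 1) := by
  cases n with
  | zero => decide
  | succ n =>
    rw [FibWord_add_two]
    exact List.prefix_append _ _

lemma FibWord_prefix_of_le {m n : ℕ} (h : m ≤ n) : FibWord m <+: FibWord n := by
  induction n with
  | zero => simp_all
  | succ n ih =>
    rcases Nat.lt_or_ge m (n + 1) with h' | h'
    · exact (ih (Nat.lt_succ_iff.mp h')).trans (FibWord_prefix n)
    · have : m = n + 1 := le_antisymm h h'
      simp [this]

lemma lt_fib (k : ℕ) : k + 1 ≤ fib (k + 3) := by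
  induction k with
  | zero => decide
  | succ k ih =>
    have h1 : 1 ≤ fib (k + 2) := Nat.fib_pos.mpr (by omega)
    have e : fib (k + 1 + 3) = fib (k + 3) + fib (k + 2) := fib_eq (k + 2)
    omega

/-- `FibSeq k` agrees with the `k`-th letter of any large enough `FibWord`. -/
lemma FibSeq_eq_getD {k n : ℕ} (h : k < fib (n + 2)) :
    FibSeq k = (FibWord n).getD k A := by
  have hk : k < (FibWord (k + 1)).length := by
    rw [FibWord_length]; exact lt_fib k
  have hn : k < (FibWord n).length := by rw [FibWord_length]; exact h
  rcases le_total (k + 1) n with hle | hle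
  · have hp := FibWord_prefix_of_le hle
    rw [FibSeq, List.getD_eq_getElem _ _ hk, List.getD_eq_getElem _ _ hn,
      hp.getElem hk]
  · have hp := FibWord_prefix_of_le hle
    rw [FibSeq, List.getD_eq_getElem _ _ hk, List.getD_eq_getElem _ _ hn,
      hp.getElem hn]

/-- The number of `A`s among the first `N` letters. -/
def cA (N : ℕ) : ℕ := ((Finset.range N).filter fun k => FibSeq k = A).card

lemma cA_succ (N : ℕ) : cA (N + 1) = cA N + (if FibSeq N = A then 1 else 0) := by
  unfold cA
  rw [Finset.range_add_one, Finset.filter_insert]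
  split <;> simp [Finset.card_insert_of_notMem]

lemma cA_eq_count {N n : ℕ} (h : N ≤ fib (n + 2)) :
    cA N = ((FibWord n).take N).count A := by
  induction N with
  | zero => simp [cA]
  | succ N ih =>
    have hN : N < (FibWord n).length := by rw [FibWord_length]; omega
    rw [cA_succ, ih (by omega), List.take_succ, List.count_append,
      List.getElem?_eq_getElem hN]
    have hgd : (FibWord n)[N] = FibSeq N := by
      rw [FibSeq_eq_getD (by rw [← FibWord_length]; exact hN),
        List.getD_eq_getElem _ _ hN]
    rw [hgd]
    rcases hc : FibSeq N with _ | _ <;> simp [hc]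

/-- Zeckendorf-style recursion for the prefix counts. -/
lemma cA_rec {m N : ℕ} (h1 : fib (m + 3) ≤ N) (h2 : N ≤ fib (m + 4)) :
    cA N = fib (m + 2) + cA (N - fib (m + 3)) := by
  have hlen1 : (FibWord (m + 1)).length = fib (m + 3) := FibWord_length _
  have hN : N ≤ fib (m + 4) := h2
  rw [cA_eq_count (n := m + 2) h2, FibWord_add_two,
    List.take_append, hlen1,
    List.take_of_length_le (by omega), List.count_append, FibWord_count]
  congr 1
  rw [cA_eq_count (n := m)]
  have e : fib (m + 4) = fib (m + 3) + fib (m + 2) := fib_eq (m + 2)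
  omega

open goldenRatio

lemma err_step (m : ℕ) :
    (fib (m + 2) : ℝ) - (φ - 1) * fib (m + 3) = ψ ^ (m + 3) := by
  have h := Real.fib_succ_sub_goldenRatio_mul_fib (m + 3)
  have hfib : (fib (m + 4) : ℝ) = fib (m + 3) + fib (m + 2) := by
    rw [show m + 4 = (m + 2) + 2 from rfl, Nat.fib_add_two]
    push_cast; ring
  rw [show m + 3 + 1 = m + 4 from rfl] at h
  rw [hfib] at h
  linear_combination h

lemma abs_goldConj : |ψ| = φ⁻¹ := by
  rw [Real.inv_goldenRatio, abs_of_neg Real.goldenConj_neg]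

lemma inv_gold_lt_one : φ⁻¹ < 1 := by
  rw [inv_lt_one_iff₀]; right; exact Real.one_lt_goldenRatio

lemma inv_gold_pos : (0:ℝ) < φ⁻¹ := by positivity

/-- Main error estimate, by strong induction. -/
lemma err_bound : ∀ m : ℕ, ∀ N : ℕ, N < fib (m + 2) →
    |(cA N : ℝ) - (φ - 1) * N| ≤ 3 * (1 - (φ⁻¹) ^ m) := by
  intro m
  induction m using Nat.strong_induction_on with
  | _ m ih =>
    match m with
    | 0 =>
      intro N hN
      interval_cases N
      simp [cA]
    | 1 =>
      intro N hN
      have h2 : fib 3 = 2 := by decide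
      rw [h2] at hN
      have hinv : φ⁻¹ = φ - 1 := by
        rw [Real.inv_goldenRatio]
        have := Real.goldenRatio_add_goldenConj
        linarith
      interval_cases N
      · have h0 : cA 0 = 0 := rfl
        rw [h0, hinv, pow_one]
        have hlt : φ < 2 := Real.goldenRatio_lt_two
        simp only [Nat.cast_zero, mul_zero, sub_zero, abs_zero]
        linarith
      · have h1c : cA 1 = 1 := by decide
        rw [h1c, hinv, pow_one]
        have hlt : φ < 2 := Real.goldenRatio_lt_two
        have hgt : 1 < φ := Real.one_lt_goldenRatio
        rw [show ((1:ℕ):ℝ) = 1 by norm_num, mul_one,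
          abs_of_pos (by linarith)]
        linarith
    | (m + 2) =>
      intro N hN
      rcases Nat.lt_or_ge N (fib (m + 3)) with h | h
      · have := ih (m + 1) (by omega) N h
        have hmono : (φ⁻¹) ^ (m + 2) ≤ (φ⁻¹) ^ (m + 1) :=
          pow_le_pow_of_le_one (le_of_lt inv_gold_pos) (le_of_lt inv_gold_lt_one) (by omega)
        linarith
      · -- fib (m+3) ≤ N < fib (m+4)
        set r := N - fib (m + 3) with hr
        have e : fib (m + 2 + 2) = fib (m + 3) + fib (m + 2) := fib_eq (m + 2)
        have e4 : fib (m + 2 + 2) = fib (m + 4) := rfl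
        have e5 : fib (m + 1 + 2) = fib (m + 3) := rfl
        have hrlt : r < fib (m + 2) := by omega
        have hN' : N ≤ fib (m + 4) := by omega
        have hrec : cA N = fib (m + 2) + cA r := cA_rec h hN' 
        have hIH : |(cA r : ℝ) - (φ - 1) * r| ≤ 3 * (1 - (φ⁻¹) ^ (m + 1)) := by
          have hfib : fib (m + 2) ≤ fib (m + 3) := Nat.fib_le_fib_succ
          exact ih (m + 1) (by omega) r (by omega)
        have hNsplit : (N : ℝ) = fib (m + 3) + r := by
          have hfp : 0 < fib (m + 3) := Nat.fib_pos.mpr (by omega)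
          push_cast [hr]
          rw [Nat.cast_sub h]
          ring
        have key : (cA N : ℝ) - (φ - 1) * N
            = ψ ^ (m + 3) + ((cA r : ℝ) - (φ - 1) * r) := by
          rw [hrec, hNsplit, ← err_step m]
          push_cast
          ring
        rw [key]
        have habs : |ψ ^ (m + 3)| = (φ⁻¹) ^ (m + 3) := by
          rw [abs_pow, abs_goldConj]
        have h1 : |ψ ^ (m + 3) + ((cA r : ℝ) - (φ - 1) * r)|
            ≤ (φ⁻¹) ^ (m + 3) + 3 * (1 - (φ⁻¹) ^ (m + 1)) := by
          calc _ ≤ |ψ ^ (m + 3)| + |(cA r : ℝ) - (φ - 1) * r| := abs_add_le _ _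
            _ ≤ _ := by rw [habs]; linarith
        refine h1.trans ?_
        -- need : φ⁻¹^(m+3) + 3 - 3 φ⁻¹^(m+1) ≤ 3 - 3 φ⁻¹^(m+2)
        -- i.e. φ⁻¹^(m+1) * (φ⁻² + 3 φ⁻¹ - 3) ≤ 0
        have hsq : (φ⁻¹) ^ 2 + 3 * φ⁻¹ ≤ 3 := by
          have hinv : φ⁻¹ = φ - 1 := by
            rw [Real.inv_goldenRatio]; have := Real.goldenRatio_add_goldenConj; linarith
          have hlt : φ < 2 := Real.goldenRatio_lt_two
          rw [hinv]
          nlinarith [Real.goldenRatio_sq]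
        have hp : (0:ℝ) ≤ (φ⁻¹) ^ (m + 1) := by positivity
        have expand1 : (φ⁻¹) ^ (m + 3) = (φ⁻¹) ^ (m + 1) * (φ⁻¹) ^ 2 := by ring
        have expand2 : (φ⁻¹) ^ (m + 2) = (φ⁻¹) ^ (m + 1) * φ⁻¹ := by ring
        rw [expand1, expand2]
        nlinarith

lemma err_bound' (N : ℕ) : |(cA N : ℝ) - (φ - 1) * N| ≤ 3 := by
  have h := err_bound (N + 1) N (lt_fib N)
  have hp : (0:ℝ) ≤ (φ⁻¹) ^ (N + 1) := by positivity
  linarith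

lemma tendsto_cA : Tendsto (fun N : ℕ => (cA N : ℝ) / N) atTop (nhds (φ - 1)) := by
  have h0 : Tendsto (fun N : ℕ => (cA N : ℝ) / N - (φ - 1)) atTop (nhds 0) := by
    apply squeeze_zero_norm' (a := fun N : ℕ => 3 / N)
    · filter_upwards [eventually_ge_atTop 1] with N hN
      have hNpos : (0:ℝ) < N := by exact_mod_cast hN
      have heq : (cA N : ℝ) / N - (φ - 1) = ((cA N : ℝ) - (φ - 1) * N) / N := by
        field_simp
      rw [Real.norm_eq_abs, heq, abs_div, abs_of_pos hNpos]
      gcongr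
      exact err_bound' N
    · exact tendsto_const_div_atTop_nhds_zero_nat 3
  have := h0.add_const (φ - 1)
  simpa using this

lemma cB_eq (N : ℕ) :
    ((Finset.range N).filter fun k => FibSeq k = B).card = N - cA N := by
  have h := Finset.card_filter_add_card_filter_not
    (s := Finset.range N) (p := fun k => FibSeq k = A)
  have heq : ((Finset.range N).filter fun k => ¬ FibSeq k = A)
      = (Finset.range N).filter fun k => FibSeq k = B := by
    apply Finset.filter_congr
    intro k _
    cases h : FibSeq k <;> simp
  rw [heq] at h
  simp only [Finset.card_range] at h
  unfold cA
  omega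

lemma cA_le (N : ℕ) : cA N ≤ N := by
  calc cA N ≤ (Finset.range N).card := Finset.card_filter_le _ _
    _ = N := Finset.card_range N

/-- The letter frequencies in the infinite Fibonacci word: the frequency of `a`
exists and equals 1/φ = φ − 1, and the frequency of `b` equals 2 − φ. -/
theorem fib_word_letter_frequencies :
    Tendsto (fun N : ℕ =>
        (((Finset.range N).filter fun k => FibSeq k = A).card : ℝ) / N)
      atTop (nhds (1 / goldenRatio')) ∧
    Tendsto (fun N : ℕ =>
        (((Finset.range N).filter fun k => FibSeq k = B).card : ℝ) / N)
      atTop (nhds (2 - goldenRatio')) := by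
  have hg : goldenRatio' = φ := rfl
  have hgold : 1 / goldenRatio' = φ - 1 := by
    rw [hg, one_div, Real.inv_goldenRatio]
    have := Real.goldenRatio_add_goldenConj
    linarith
  constructor
  · rw [hgold]
    exact tendsto_cA
  · have hB : Tendsto (fun N : ℕ => 1 - (cA N : ℝ) / N) atTop (nhds (1 - (φ - 1))) :=
      tendsto_const_nhds.sub tendsto_cA
    have h2 : (1 : ℝ) - (φ - 1) = 2 - goldenRatio' := by rw [hg]; ring
    rw [← h2]
    apply hB.congr'
    filter_upwards [eventually_ge_atTop 1] with N hN
    have hNpos : (0:ℝ) < N := by exact_mod_cast hN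
    rw [cB_eq N]
    rw [Nat.cast_sub (cA_le N)]
    field_simp
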